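/- Let f : Matrix (Fin 3) (Fin 2) ℂ → ℂ be a polynomial function (the evaluation of a multivariate polynomial in the 6 matrix entries) which is invariant under the right action of SL(2,ℂ): f(m · g) = f(m) for every 3×2 complex matrix m and every g ∈ SL(2,ℂ) (with m · g the matrix product). Then there exists a polynomial P in 3 variables with complex coefficients such that f(m) = P(δ₀(m), δ₁(m), δ₂(m)) for all m, where δ₀(m) = m₁₀m₂₁ − m₁₁m₂₀, δ₁(m) = m₀₀m₂₁ − m₀₁m₂₀, δ₂(m) = m₀₀m₁₁ − m₀₁m₁₀ are the three 2×2 minors of m. -/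

import Mathlib

open MvPolynomial

namespace SL2InvAux

/-- The three `2 × 2` minors of a `3 × 2` matrix. -/
def delta (m : Matrix (Fin 3) (Fin 2) ℂ) : Fin 3 → ℂ :=
  ![m 1 0 * m 2 1 - m 1 1 * m 2 0,
    m 0 0 * m 2 1 - m 0 1 * m 2 0,
    m 0 0 * m 1 1 - m 0 1 * m 1 0]

lemma eval_bind₁' {σ τ : Type} (v : τ → ℂ) (g : σ → MvPolynomial τ ℂ)
    (φ : MvPolynomial σ ℂ) :
    eval v (bind₁ g φ) = eval (fun i => eval v (g i)) φ :=
  eval₂Hom_bind₁ (RingHom.id ℂ) v g φ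

lemma cons_one (e : ℂ) (d : Fin 3 → ℂ) : (Fin.cons e d : Fin 4 → ℂ) 1 = d 0 := rfl
lemma cons_two (e : ℂ) (d : Fin 3 → ℂ) : (Fin.cons e d : Fin 4 → ℂ) 2 = d 1 := rfl
lemma cons_three (e : ℂ) (d : Fin 3 → ℂ) : (Fin.cons e d : Fin 4 → ℂ) 3 = d 2 := rfl

/-- Clearing denominators: evaluating a polynomial in four variables at
`(d i)⁻¹, d 0, d 1, d 2` and multiplying by a high power of `d i` gives a
polynomial in `d`. -/
lemma clearDenom (G : MvPolynomial (Fin 4) ℂ) (i : Fin 3) :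
    ∃ (N : ℕ) (Q : MvPolynomial (Fin 3) ℂ), ∀ d : Fin 3 → ℂ, d i ≠ 0 →
      (d i) ^ N * eval (Fin.cons (d i)⁻¹ d) G = eval d Q := by
  set G' := finSuccEquiv ℂ 3 G with hG'
  refine ⟨G'.natDegree, ∑ k ∈ Finset.range (G'.natDegree + 1),
      Polynomial.coeff G' k * X i ^ (G'.natDegree - k), fun d hd => ?_⟩
  have h1 : eval (Fin.cons (d i)⁻¹ d) G
      = Polynomial.eval (d i)⁻¹ (Polynomial.map (eval d) G') :=
    eval_eq_eval_mv_eval' d (d i)⁻¹ G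
  have hdeg : (Polynomial.map (eval d) G').natDegree < G'.natDegree + 1 :=
    Nat.lt_succ_of_le Polynomial.natDegree_map_le
  rw [h1, Polynomial.eval_eq_sum_range' hdeg, map_sum, Finset.mul_sum]
  refine Finset.sum_congr rfl fun k hk => ?_
  have hk' : k ≤ G'.natDegree := Nat.lt_succ_iff.mp (Finset.mem_range.mp hk)
  rw [Polynomial.coeff_map, eval_mul, eval_pow, eval_X, pow_sub₀ _ hd hk']
  ring

/-- The chart lemma: if on the locus `delta m i ≠ 0` the invariant function can be
written as `F` evaluated at a canonical matrix whose entries are polynomial in the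
minors and `(delta m i)⁻¹`, then a power of the `i`-th minor times `f` is a
polynomial in the minors. -/
lemma chart (f : Matrix (Fin 3) (Fin 2) ℂ → ℂ) (F : MvPolynomial (Fin 3 × Fin 2) ℂ)
    (i : Fin 3) (s : Fin 3 × Fin 2 → MvPolynomial (Fin 4) ℂ)
    (hcan : ∀ m : Matrix (Fin 3) (Fin 2) ℂ, delta m i ≠ 0 →
      f m = eval (fun ij => eval (Fin.cons (delta m i)⁻¹ (delta m)) (s ij)) F) :
    ∃ (N : ℕ) (Q : MvPolynomial (Fin 3) ℂ), ∀ m : Matrix (Fin 3) (Fin 2) ℂ,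
      delta m i ≠ 0 → (delta m i) ^ N * f m = eval (delta m) Q := by
  obtain ⟨N, Q, hQ⟩ := clearDenom (bind₁ s F) i
  refine ⟨N, Q, fun m hm => ?_⟩
  rw [hcan m hm, ← eval_bind₁']
  exact hQ _ hm

end SL2InvAux

open SL2InvAux in
theorem sl2_invariant_polynomial_is_polynomial_in_minors
    (f : Matrix (Fin 3) (Fin 2) ℂ → ℂ)
    (hpoly : ∃ F : MvPolynomial (Fin 3 × Fin 2) ℂ,
      ∀ m : Matrix (Fin 3) (Fin 2) ℂ,
        f m = MvPolynomial.eval (fun ij => m ij.1 ij.2) F)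
    (hinv : ∀ (m : Matrix (Fin 3) (Fin 2) ℂ) (g : Matrix.SpecialLinearGroup (Fin 2) ℂ),
      f (m * (g : Matrix (Fin 2) (Fin 2) ℂ)) = f m) :
    ∃ P : MvPolynomial (Fin 3) ℂ, ∀ m : Matrix (Fin 3) (Fin 2) ℂ,
      f m = MvPolynomial.eval
        ![m 1 0 * m 2 1 - m 1 1 * m 2 0,
          m 0 0 * m 2 1 - m 0 1 * m 2 0,
          m 0 0 * m 1 1 - m 0 1 * m 1 0] P := by
  obtain ⟨F, hF⟩ := hpoly
  -- chart at δ₀ ≠ 0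
  have hcan0 : ∀ m : Matrix (Fin 3) (Fin 2) ℂ, delta m 0 ≠ 0 →
      f m = eval (fun ij => eval (Fin.cons (delta m 0)⁻¹ (delta m))
        ((fun ij : Fin 3 × Fin 2 => !![X 2, -(X 3 * X 0); X 1, 0; 0, 1] ij.1 ij.2) ij)) F := by
    intro m hm
    have hm' : m 1 0 * m 2 1 - m 1 1 * m 2 0 ≠ 0 := by simpa [delta] using hm
    let g : Matrix.SpecialLinearGroup (Fin 2) ℂ :=
      ⟨!![m 2 1, -(m 1 1) * (m 1 0 * m 2 1 - m 1 1 * m 2 0)⁻¹;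
          -(m 2 0), m 1 0 * (m 1 0 * m 2 1 - m 1 1 * m 2 0)⁻¹], by
        rw [Matrix.det_fin_two_of]
        rw [← mul_inv_cancel₀ hm']
        ring⟩
    have hg : (g : Matrix (Fin 2) (Fin 2) ℂ)
        = !![m 2 1, -(m 1 1) * (m 1 0 * m 2 1 - m 1 1 * m 2 0)⁻¹;
             -(m 2 0), m 1 0 * (m 1 0 * m 2 1 - m 1 1 * m 2 0)⁻¹] := rfl
    rw [← hinv m g, hF]
    have hab : (fun ij : Fin 3 × Fin 2 =>
          (m * (g : Matrix (Fin 2) (Fin 2) ℂ)) ij.1 ij.2)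
        = (fun ij : Fin 3 × Fin 2 => eval (Fin.cons (delta m 0)⁻¹ (delta m))
            ((fun ij : Fin 3 × Fin 2 =>
              !![X 2, -(X 3 * X 0); X 1, 0; 0, 1] ij.1 ij.2) ij)) := by
      funext ij
      obtain ⟨a, b⟩ := ij
      fin_cases a <;> fin_cases b
      all_goals try simp [Matrix.mul_apply, Fin.sum_univ_two, hg, delta, cons_one,
        cons_two, cons_three, Fin.cons_zero]
      all_goals try field_simp
      all_goals try ring
      all_goals rw [← mul_inv_cancel₀ hm']; ring
    rw [hab]
  obtain ⟨N', Q', hQ'⟩ := chart f F 0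
      (fun ij => !![X 2, -(X 3 * X 0); X 1, 0; 0, 1] ij.1 ij.2) hcan0
  -- chart at δ₂ ≠ 0
  have hcan2 : ∀ m : Matrix (Fin 3) (Fin 2) ℂ, delta m 2 ≠ 0 →
      f m = eval (fun ij => eval (Fin.cons (delta m 2)⁻¹ (delta m))
        ((fun ij : Fin 3 × Fin 2 => !![X 3, 0; 0, 1; -(X 1), X 2 * X 0] ij.1 ij.2) ij)) F := by
    intro m hm
    have hm' : m 0 0 * m 1 1 - m 0 1 * m 1 0 ≠ 0 := by simpa [delta] using hm
    let g : Matrix.SpecialLinearGroup (Fin 2) ℂ :=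
      ⟨!![m 1 1, -(m 0 1) * (m 0 0 * m 1 1 - m 0 1 * m 1 0)⁻¹;
          -(m 1 0), m 0 0 * (m 0 0 * m 1 1 - m 0 1 * m 1 0)⁻¹], by
        rw [Matrix.det_fin_two_of]
        rw [← mul_inv_cancel₀ hm']
        ring⟩
    have hg : (g : Matrix (Fin 2) (Fin 2) ℂ)
        = !![m 1 1, -(m 0 1) * (m 0 0 * m 1 1 - m 0 1 * m 1 0)⁻¹;
             -(m 1 0), m 0 0 * (m 0 0 * m 1 1 - m 0 1 * m 1 0)⁻¹] := rfl
    rw [← hinv m g, hF]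
    have hab : (fun ij : Fin 3 × Fin 2 =>
          (m * (g : Matrix (Fin 2) (Fin 2) ℂ)) ij.1 ij.2)
        = (fun ij : Fin 3 × Fin 2 => eval (Fin.cons (delta m 2)⁻¹ (delta m))
            ((fun ij : Fin 3 × Fin 2 =>
              !![X 3, 0; 0, 1; -(X 1), X 2 * X 0] ij.1 ij.2) ij)) := by
      funext ij
      obtain ⟨a, b⟩ := ij
      fin_cases a <;> fin_cases b
      all_goals try simp [Matrix.mul_apply, Fin.sum_univ_two, hg, delta, cons_one,
        cons_two, cons_three, Fin.cons_zero]
      all_goals try field_simp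
      all_goals try ring
      all_goals rw [← mul_inv_cancel₀ hm']; ring
    rw [hab]
  obtain ⟨N, Q, hQ⟩ := chart f F 2
      (fun ij => !![X 3, 0; 0, 1; -(X 1), X 2 * X 0] ij.1 ij.2) hcan2
  -- glue the two charts into a polynomial identity
  have hglue : Q' * X 2 ^ N * (X 0 * X 2) = Q * X 0 ^ N' * (X 0 * X 2) := by
    apply MvPolynomial.funext
    intro d
    by_cases h0 : d 0 = 0
    · simp [h0]
    by_cases h2 : d 2 = 0
    · simp [h2]
    set m : Matrix (Fin 3) (Fin 2) ℂ :=
      Matrix.of ![![d 2, 0], ![0, 1], ![-(d 0), d 1 * (d 2)⁻¹]] with hmdef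
    have hdm : delta m = d := by
      funext j
      fin_cases j
      all_goals try simp [delta, hmdef]
      all_goals try field_simp
    have e0 : eval d Q' = d 0 ^ N' * f m := by
      rw [← hdm]
      exact (hQ' m (by rw [hdm]; exact h0)).symm
    have e2 : eval d Q = d 2 ^ N * f m := by
      rw [← hdm]
      exact (hQ m (by rw [hdm]; exact h2)).symm
    simp only [eval_mul, eval_pow, eval_X, e0, e2]
    ring
  have hcancel : Q' * X 2 ^ N = Q * X 0 ^ N' :=
    mul_right_cancel₀ (mul_ne_zero (X_ne_zero 0) (X_ne_zero 2)) hglue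
  -- X 0 is prime and does not divide X 2 ^ N, so X 0 ^ N' divides Q'
  have hprime : Prime (X 0 : MvPolynomial (Fin 3) ℂ) := by
    rw [← MulEquiv.prime_iff (finSuccEquiv ℂ 2).toMulEquiv]
    simpa [finSuccEquiv_X_zero] using Polynomial.prime_X
  have hndvd : ¬ (X 0 : MvPolynomial (Fin 3) ℂ) ∣ X 2 ^ N := by
    rintro ⟨r, hr⟩
    have := congrArg (eval (fun j : Fin 3 => if j = 0 then 0 else 1)) hr
    simp at this
  have hdvd : (X 0 : MvPolynomial (Fin 3) ℂ) ^ N' ∣ Q' * X 2 ^ N := by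
    rw [hcancel]; exact dvd_mul_left _ _
  obtain ⟨P, hP⟩ := hprime.pow_dvd_of_dvd_mul_right N' hndvd hdvd
  -- so f m = eval (delta m) P whenever delta m 0 ≠ 0
  have key : ∀ m : Matrix (Fin 3) (Fin 2) ℂ, delta m 0 ≠ 0 →
      f m = eval (delta m) P := by
    intro m hm
    have h := hQ' m hm
    rw [hP, eval_mul, eval_pow, eval_X] at h
    exact mul_left_cancel₀ (pow_ne_zero _ hm) h
  -- extend to all matrices by density
  set Dp : Fin 3 → MvPolynomial (Fin 3 × Fin 2) ℂ :=
    ![X (1, 0) * X (2, 1) - X (1, 1) * X (2, 0),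
      X (0, 0) * X (2, 1) - X (0, 1) * X (2, 0),
      X (0, 0) * X (1, 1) - X (0, 1) * X (1, 0)] with hDpdef
  have hDp : ∀ (v : Fin 3 × Fin 2 → ℂ) (j : Fin 3),
      eval v (Dp j) = delta (Matrix.of fun a b => v (a, b)) j := by
    intro v j
    fin_cases j <;> simp [hDpdef, delta]
  have hfun : ∀ v : Fin 3 × Fin 2 → ℂ,
      eval v (F * Dp 0) = eval v (bind₁ Dp P * Dp 0) := by
    intro v
    set m : Matrix (Fin 3) (Fin 2) ℂ := Matrix.of fun a b => v (a, b) with hmdef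
    have hvm : (fun ij : Fin 3 × Fin 2 => m ij.1 ij.2) = v := rfl
    by_cases h : delta m 0 = 0
    · rw [eval_mul, eval_mul, hDp, h, mul_zero, mul_zero]
    · have h1 : eval v F = f m := by rw [hF m, hvm]
      have h2 : eval v (bind₁ Dp P) = f m := by
        rw [eval_bind₁']
        have hd : (fun j => eval v (Dp j)) = delta m := by
          funext j; exact hDp v j
        rw [hd, ← key m h]
      rw [eval_mul, eval_mul, h1, h2]
  have hFP : F = bind₁ Dp P := by
    have hD0 : (Dp 0 : MvPolynomial (Fin 3 × Fin 2) ℂ) ≠ 0 := by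
      intro hc
      have := congrArg (eval (fun p : Fin 3 × Fin 2 =>
        if p = (1, 0) ∨ p = (2, 1) then 1 else 0)) hc
      simp [hDpdef] at this
    exact mul_right_cancel₀ hD0 (MvPolynomial.funext hfun)
  refine ⟨P, fun m => ?_⟩
  have hd : (fun j => eval (fun ij : Fin 3 × Fin 2 => m ij.1 ij.2) (Dp j)) = delta m := by
    funext j
    exact hDp (fun ij : Fin 3 × Fin 2 => m ij.1 ij.2) j
  rw [hF, hFP, eval_bind₁', hd]
  rfl
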